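/- For all integers 1 ≤ k ≤ t ≤ n, the family of vectors obtained as follows is an (n,k,t)-splitter of size C(n+t-2, t-1): for each nondecreasing tuple (i_1 ≤ i_2 ≤ … ≤ i_{t−1}) with entries in [n], assign to each element j ∈ [n] the color |{ℓ : i_ℓ ≤ j}| + 1. That is, for every index set I ⊆ [n] with |I| = k, some vector in the family partitions I into color classes whose sizes pairwise differ by at most 1. -/

import Mathlib

lemma ofFn_get_cast {α : Type*} (l : List α) {m : ℕ} (h : m = l.length) :
    List.ofFn (fun i : Fin m => l.get (Fin.cast h i)) = l := by
  subst h
  exact List.ofFn_get l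

/-- Monotone tuples `Fin m → Fin n` are equivalent to multisets of size `m` over `Fin n`. -/
def monoSymEquiv (n m : ℕ) : {v : Fin m → Fin n // Monotone v} ≃ Sym (Fin n) m where
  toFun v := ⟨(List.ofFn v.1 : List (Fin n)), by simp⟩
  invFun s := ⟨fun i => (Multiset.sort s.1 (· ≤ ·)).get
      (Fin.cast (by rw [Multiset.length_sort, s.2]) i),
    fun i j hij => (Multiset.pairwise_sort s.1 (· ≤ ·)).rel_get_of_le (R := (· ≤ ·)) (by exact hij)⟩
  left_inv v := by
    have hs : Multiset.sort (↑(List.ofFn v.1) : Multiset (Fin n)) (· ≤ ·) = List.ofFn v.1 :=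
      List.Perm.eq_of_pairwise' (Multiset.pairwise_sort _ _)
        (List.pairwise_ofFn.mpr (fun i j h => v.2 h.le)) (Multiset.coe_eq_coe.mp (Multiset.sort_eq _ _))
    apply Subtype.ext
    funext i
    dsimp only
    rw [List.get_of_eq hs, List.get_ofFn]
    congr 1
  right_inv s := by
    apply Subtype.ext
    dsimp only
    rw [ofFn_get_cast]
    exact Multiset.sort_eq _ _

/-- The family of colorings of `[n]` by colors `1,…,t` obtained from nondecreasing tuples
`(i_1 ≤ … ≤ i_{t-1})` over `[n]`, assigning to `j` the color `|{ℓ : i_ℓ ≤ j}| + 1`, has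
size `C(n+t-2, t-1)` and is an `(n,k,t)`-splitter: for every `I` with `|I| = k`, some such
coloring partitions `I` into color classes whose sizes pairwise differ by at most `1`. -/
theorem stmt_18 (n k t : ℕ) (hk : 1 ≤ k) (hkt : k ≤ t) (htn : t ≤ n) :
    Nat.card {v : Fin (t - 1) → Fin n // Monotone v} = (n + t - 2).choose (t - 1) ∧
    ∀ I : Finset (Fin n), I.card = k →
      ∃ v : Fin (t - 1) → Fin n, Monotone v ∧
        ∀ q ∈ Finset.Icc 1 t, ∀ q' ∈ Finset.Icc 1 t,
          (I.filter fun j => (Finset.univ.filter fun ℓ => v ℓ ≤ j).card + 1 = q).card ≤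
          (I.filter fun j => (Finset.univ.filter fun ℓ => v ℓ ≤ j).card + 1 = q').card + 1 := by
  constructor
  · rw [Nat.card_eq_fintype_card, Fintype.card_congr (monoSymEquiv n (t - 1)),
      Sym.card_sym_eq_choose, Fintype.card_fin]
    congr 1
    omega
  · intro I hI
    have e := I.orderIsoOfFin hI
    -- the tuple: element `ℓ` maps to the `min (ℓ+1) (k-1)`-th element of `I`
    refine ⟨fun ℓ => (e ⟨min ((ℓ : ℕ) + 1) (k - 1), by omega⟩ : Fin n), ?_, ?_⟩
    · intro ℓ ℓ' h
      have : (⟨min ((ℓ : ℕ) + 1) (k - 1), by omega⟩ : Fin k) ≤ ⟨min ((ℓ' : ℕ) + 1) (k - 1), by omega⟩ := by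
        simp only [Fin.mk_le_mk]
        have : (ℓ : ℕ) ≤ ℓ' := h
        omega
      exact Subtype.coe_le_coe.mpr (e.monotone this)
    · -- strict monotonicity of the counting function along `I`
      set v : Fin (t - 1) → Fin n :=
        fun ℓ => (e ⟨min ((ℓ : ℕ) + 1) (k - 1), by omega⟩ : Fin n) with hv
      have key : ∀ i i' : Fin k, i < i' →
          (Finset.univ.filter fun ℓ => v ℓ ≤ (e i : Fin n)).card <
          (Finset.univ.filter fun ℓ => v ℓ ≤ (e i' : Fin n)).card := by
        intro i i' hii
        apply Finset.card_lt_card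
        constructor
        · intro ℓ hℓ
          simp only [Finset.mem_filter, Finset.mem_univ, true_and] at hℓ ⊢
          exact hℓ.trans (Subtype.coe_le_coe.mpr (e.monotone hii.le))
        · intro hsub
          have hi' : (i : ℕ) < t - 1 := by
            have := i'.2
            have : (i : ℕ) < (i' : ℕ) := hii
            omega
          have hmem := hsub (Finset.mem_filter.mpr ⟨Finset.mem_univ (⟨(i : ℕ), hi'⟩ : Fin (t - 1)),
            ?_⟩)
          · simp only [Finset.mem_filter, Finset.mem_univ, true_and, hv] at hmem
            have hlt : i < (⟨min ((i : ℕ) + 1) (k - 1), by omega⟩ : Fin k) := by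
              simp only [Fin.lt_def]
              have : (i : ℕ) < (i' : ℕ) := hii
              have := i'.2
              omega
            have := e.strictMono hlt
            have := Subtype.coe_lt_coe.mpr this
            exact absurd hmem (not_le.mpr this)
          · -- v ⟨i⟩ ≤ e i'
            simp only [hv]
            have hle : (⟨min ((i : ℕ) + 1) (k - 1), by omega⟩ : Fin k) ≤ i' := by
              simp only [Fin.le_def]
              have : (i : ℕ) < (i' : ℕ) := hii
              have := i'.2
              omega
            exact Subtype.coe_le_coe.mpr (e.monotone hle)
      have hinj : ∀ j ∈ I, ∀ j' ∈ I,
          (Finset.univ.filter fun ℓ => v ℓ ≤ j).card =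
          (Finset.univ.filter fun ℓ => v ℓ ≤ j').card → j = j' := by
        intro j hj j' hj' hc
        have h1 : (e (e.symm ⟨j, hj⟩) : Fin n) = j := by simp
        have h2 : (e (e.symm ⟨j', hj'⟩) : Fin n) = j' := by simp
        rcases lt_trichotomy (e.symm ⟨j, hj⟩) (e.symm ⟨j', hj'⟩) with h | h | h
        · have := key _ _ h; rw [h1, h2] at this; omega
        · rw [← h1, ← h2, h]
        · have := key _ _ h; rw [h1, h2] at this; omega
      intro q hq q' hq'
      have hcard1 : (I.filter fun j =>
          (Finset.univ.filter fun ℓ => v ℓ ≤ j).card + 1 = q).card ≤ 1 := by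
        apply Finset.card_le_one.mpr
        intro a ha b hb
        simp only [Finset.mem_filter] at ha hb
        exact hinj a ha.1 b hb.1 (by omega)
      omega
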